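/- There exists an uncountable set Y of points on the unit circle {z ∈ ℂ : |z| = 1} such that for every y ∈ Y the Rogers–Ramanujan continued fraction K does not converge to a finite value at y; that is, the sequence (P_n(y)/Q_n(y)) does not converge to any L ∈ ℂ. -/

import Mathlib

open Filter Topology

/-- Numerators `P_n` of the Rogers–Ramanujan continued fraction
`1 + q/(1 + q²/(1 + q³/(1 + ⋯)))`:  `P_{-1} = 1`, `P_0 = 1`,
`P_n = P_{n-1} + q^n P_{n-2}`. -/
noncomputable def rrP (q : ℂ) : ℕ → ℂ
  | 0 => 1
  | 1 => 1 + q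
  | n + 2 => rrP q (n + 1) + q ^ (n + 2) * rrP q n

/-- Denominators `Q_n` of the Rogers–Ramanujan continued fraction:  `Q_{-1} = 0`,
`Q_0 = 1`, `Q_n = Q_{n-1} + q^n Q_{n-2}`. -/
noncomputable def rrQ (q : ℂ) : ℕ → ℂ
  | 0 => 1
  | 1 => 1
  | n + 2 => rrQ q (n + 1) + q ^ (n + 2) * rrQ q n

namespace RRaux

variable {q : ℂ}

/-- Gaussian binomial (row `N`, column `K ∈ ℤ`) at base `q`, via Pascal recurrence. -/
noncomputable def B (q : ℂ) : ℕ → ℤ → ℂ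
  | 0, K => if K = 0 then 1 else 0
  | (N+1), K => B q N K + q ^ ((N : ℤ) + 1 - K) * B q N (K - 1)

variable {q : ℂ}

lemma B_succ (N : ℕ) (K : ℤ) :
    B q (N+1) K = B q N K + q ^ ((N : ℤ) + 1 - K) * B q N (K - 1) := rfl

lemma B_neg : ∀ (N : ℕ) (K : ℤ), K < 0 → B q N K = 0 := by
  intro N
  induction N with
  | zero => intro K hK; simp only [B]; rw [if_neg (by omega)]
  | succ N ih =>
    intro K hK
    rw [B_succ, ih K hK, ih (K-1) (by omega)]
    ring

lemma B_gt : ∀ (N : ℕ) (K : ℤ), (N : ℤ) < K → B q N K = 0 := by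
  intro N
  induction N with
  | zero => intro K hK; simp only [B]; rw [if_neg (by omega)]
  | succ N ih =>
    intro K hK
    push_cast at hK
    rw [B_succ, ih K (by omega), ih (K-1) (by omega)]
    ring

lemma B_zero (N : ℕ) : B q N 0 = 1 := by
  induction N with
  | zero => simp [B]
  | succ N ih => rw [B_succ, ih, B_neg N (0-1) (by omega)]; ring

lemma B_diag (N : ℕ) : B q N (N : ℤ) = 1 := by
  induction N with
  | zero => simp [B]
  | succ N ih =>
    push_cast
    rw [B_succ, B_gt N ((N:ℤ)+1) (by omega)]
    rw [show (N:ℤ) + 1 - ((N:ℤ)+1) = 0 from by ring, zpow_zero,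
      show (N:ℤ) + 1 - 1 = (N:ℤ) from by ring, ih]
    ring

/-- The second Pascal rule. -/
lemma B_pascal2 (hq : q ≠ 0) : ∀ (N : ℕ) (K : ℤ), B q (N+1) K = B q N (K - 1) + q ^ K * B q N K := by
  intro N
  induction N with
  | zero =>
    intro K
    rcases eq_or_ne K 0 with rfl | h0
    · rw [B_succ]
      simp only [B]
      norm_num
    rcases eq_or_ne K 1 with rfl | h1
    · rw [B_succ]
      simp only [B]
      norm_num
    · rw [B_succ]
      simp only [B, if_neg h0, if_neg (show ¬(K - 1 = 0) from by omega)]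
      ring
  | succ N ih =>
    intro K
    conv_lhs => rw [B_succ, ih K, ih (K-1)]
    conv_rhs => rw [B_succ, B_succ]
    have e1 : q ^ ((N:ℤ)+1+1-K) * q^(K-1) = q ^ ((N:ℤ)+1) := by
      rw [← zpow_add₀ hq]; ring_nf
    have e2 : q ^ (K:ℤ) * q^((N:ℤ)+1-K) = q ^ ((N:ℤ)+1) := by
      rw [← zpow_add₀ hq]; ring_nf
    push_cast
    rw [show (N:ℤ)+1-(K-1) = (N:ℤ)+1+1-K from by ring]
    linear_combination (B q N (K-1)) * e1 - (B q N (K-1)) * e2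

/-- symmetric identity. -/
lemma B_symm (hq : q ≠ 0) (N : ℕ) (K : ℤ) :
    (1 - q ^ K) * B q N K = (1 - q ^ ((N:ℤ) + 1 - K)) * B q N (K - 1) := by
  have h := B_pascal2 hq N K
  rw [B_succ] at h
  linear_combination h

/-- column-clearing identity. -/
lemma B_star (hq : q ≠ 0) (N : ℕ) (K : ℤ) :
    (1 - q ^ ((N:ℤ) + 1 - K)) * B q (N+1) K = (1 - q ^ ((N:ℤ)+1)) * B q N K := by
  rw [B_succ]
  have h := B_symm hq N K
  have e2 : q ^ ((N:ℤ)+1-K) * q ^ (K:ℤ) = q ^ ((N:ℤ)+1) := by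
    rw [← zpow_add₀ hq]; ring_nf
  calc (1 - q ^ ((N:ℤ) + 1 - K)) * (B q N K + q ^ ((N : ℤ) + 1 - K) * B q N (K - 1))
      = (1 - q ^ ((N:ℤ)+1-K)) * B q N K + q ^ ((N:ℤ)+1-K) * ((1 - q^((N:ℤ)+1-K)) * B q N (K-1)) := by ring
    _ = (1 - q ^ ((N:ℤ)+1-K)) * B q N K + q ^ ((N:ℤ)+1-K) * ((1 - q^K) * B q N K) := by rw [← h]
    _ = (1 - q ^ ((N:ℤ)+1-K) + q ^ ((N:ℤ)+1-K) - q ^ ((N:ℤ)+1-K) * q^(K:ℤ)) * B q N K := by ring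
    _ = (1 - q ^ ((N:ℤ)+1)) * B q N K := by rw [e2]; ring_nf


/-- summand of Schur's identity -/
noncomputable def T (q : ℂ) (n : ℕ) (j : ℤ) : ℂ :=
  (-1 : ℂ) ^ j * q ^ (j * (5*j+3) / 2) * B q (n+1) (((n:ℤ) - 5*j) / 2)

lemma twoE (j : ℤ) : 2 * (j * (5*j+3) / 2) = j * (5*j+3) := by
  apply Int.mul_ediv_cancel'
  rcases Int.even_or_odd j with ⟨a, rfl⟩ | ⟨a, rfl⟩
  · exact ⟨a * (5*(a+a)+3), by ring⟩
  · exact ⟨(2*a+1) * (5*a+4), by ring⟩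

lemma T_vanish (n : ℕ) (j : ℤ) (h : (n:ℤ) - 5*j < 0 ∨ (n:ℤ) - 5*j ≥ 2*(n:ℤ)+4) :
    T q n j = 0 := by
  rcases h with h | h
  · rw [T, B_neg (n+1) _ (by omega)]; ring
  · rw [T, B_gt (n+1) _ (by push_cast; omega)]; ring

lemma pair (hq : q ≠ 0) (k : ℕ) (j s : ℤ) (hs : (k:ℤ) + 2 - 5*j = 2*s+1) :
    (T q (k+2) j - T q (k+1) j - q^((k:ℤ)+2) * T q k j)
    + (T q (k+2) (j+1) - T q (k+1) (j+1) - q^((k:ℤ)+2) * T q k (j+1)) = 0 := by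
  have e1 : (((k+2:ℕ):ℤ) - 5*j) / 2 = s := by push_cast; omega
  have e2 : (((k+1:ℕ):ℤ) - 5*j) / 2 = s := by push_cast; omega
  have e3 : (((k:ℕ):ℤ) - 5*j) / 2 = s - 1 := by omega
  have e4 : (((k+2:ℕ):ℤ) - 5*(j+1)) / 2 = s - 2 := by push_cast; omega
  have e5 : (((k+1:ℕ):ℤ) - 5*(j+1)) / 2 = s - 3 := by push_cast; omega
  have e6 : (((k:ℕ):ℤ) - 5*(j+1)) / 2 = s - 3 := by omega
  have hE : (j+1) * (5*(j+1)+3) / 2 = j * (5*j+3) / 2 + (5*j + 4) := by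
    have h1 := twoE (j+1); have h2 := twoE j
    have : (j+1) * (5*(j+1)+3) = j * (5*j+3) + 2*(5*j+4) := by ring
    omega
  -- bracket 1
  have b1 : B q (k+3) s - B q (k+2) s - q^((k:ℤ)+2) * B q (k+1) (s-1)
      = q^((k:ℤ)+3-s) * B q (k+1) (s-2) := by
    have p1 := B_succ (q := q) (k+2) s
    have p2 := B_pascal2 hq (k+1) (s-1)
    have m1 : q ^ (((k+2:ℕ):ℤ)+1-s) * q^(s-1) = q ^ ((k:ℤ)+2) := by
      rw [← zpow_add₀ hq]; push_cast; ring_nf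
    have m1' : (((k+2:ℕ):ℤ)+1-s) = ((k:ℤ)+3-s) := by push_cast; ring
    rw [m1'] at p1 m1
    rw [show s-1-1 = s-2 from by ring] at p2
    rw [show k+3 = (k+2)+1 from rfl, p1, p2]
    linear_combination (B q (k+1) (s-1)) * m1
  -- bracket 2
  have b2 : B q (k+3) (s-2) - B q (k+2) (s-3) - q^((k:ℤ)+2) * B q (k+1) (s-3)
      = q^(s-2) * B q (k+1) (s-2) := by
    have p1 := B_pascal2 hq (k+2) (s-2)
    have p2 := B_succ (q := q) (k+1) (s-2)
    have m1 : q ^ (s-2) * q^(((k+1:ℕ):ℤ)+1-(s-2)) = q ^ ((k:ℤ)+2) := by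
      rw [← zpow_add₀ hq]; push_cast; ring_nf
    rw [show (s-2)-1 = s - 3 from by ring] at p1 p2
    rw [show k+3 = (k+2)+1 from rfl, p1, p2]
    linear_combination (B q (k+1) (s-3)) * m1
  -- assemble
  simp only [T, e1, e2, e3, e4, e5, e6, hE]
  have sgn : (-1 : ℂ) ^ (j+1) = -((-1:ℂ)^j) := by
    rw [zpow_add_one₀ (by norm_num : (-1:ℂ) ≠ 0)]; ring
  have expE : q ^ (j * (5*j+3) / 2 + (5*j+4)) = q ^ (j * (5*j+3) / 2) * q ^ (5*j+4) := by
    rw [← zpow_add₀ hq]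
  have mexp : q ^ (5*j+4 : ℤ) * q ^ (s-2 : ℤ) = q ^ ((k:ℤ)+3-s) := by
    rw [← zpow_add₀ hq]; congr 1; omega
  rw [sgn, expE]
  rw [show ((k:ℕ)+2+1) = k+3 from rfl, show ((k:ℕ)+1+1) = k+2 from rfl]
  calc (-1:ℂ)^j * q ^ (j*(5*j+3)/2) * B q (k+3) s - (-1:ℂ)^j * q ^ (j*(5*j+3)/2) * B q (k+2) s
        - q^((k:ℤ)+2) * ((-1:ℂ)^j * q ^ (j*(5*j+3)/2) * B q (k+1) (s-1))
      + (-(-1:ℂ)^j * (q ^ (j*(5*j+3)/2) * q^(5*j+4)) * B q (k+3) (s-2)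
        - -(-1:ℂ)^j * (q ^ (j*(5*j+3)/2) * q^(5*j+4)) * B q (k+2) (s-3)
        - q^((k:ℤ)+2) * (-(-1:ℂ)^j * (q ^ (j*(5*j+3)/2) * q^(5*j+4)) * B q (k+1) (s-3)))
      = (-1:ℂ)^j * q ^ (j*(5*j+3)/2) *
          ((B q (k+3) s - B q (k+2) s - q^((k:ℤ)+2) * B q (k+1) (s-1))
           - q^(5*j+4) * (B q (k+3) (s-2) - B q (k+2) (s-3) - q^((k:ℤ)+2) * B q (k+1) (s-3))) := by
        ring
    _ = 0 := by
        rw [b1, b2, ← mul_assoc, mexp]; ring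

/-- Schur sum -/
noncomputable def R (q : ℂ) (n : ℕ) : ℂ := ∑ j ∈ Finset.Icc (-(n:ℤ)-1) (n:ℤ), T q n j

lemma sum_ext (n : ℕ) (a b : ℤ) (ha : a ≤ -(n:ℤ)-1) (hb : (n:ℤ) ≤ b) :
    ∑ j ∈ Finset.Icc a b, T q n j = R q n := by
  rw [R]
  symm
  apply Finset.sum_subset
  · intro j hj
    rw [Finset.mem_Icc] at hj ⊢
    omega
  · intro j hj hnj
    rw [Finset.mem_Icc] at hj hnj
    apply T_vanish
    omega

lemma pair_sum (f : ℤ → ℂ) (a : ℤ) :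
    ∀ (t : ℕ), (∀ i : ℕ, (i:ℤ) ≤ t → f (a + 2*i) + f (a + 2*i+1) = 0) →
    ∑ j ∈ Finset.Icc a (a + 2*(t:ℤ) + 1), f j = 0 := by
  intro t
  induction t with
  | zero =>
    intro h
    have h0 := h 0 (by norm_num)
    have : Finset.Icc a (a + 2*((0:ℕ):ℤ) + 1) = insert a {a+1} := by
      ext x
      simp only [Finset.mem_Icc, Finset.mem_insert, Finset.mem_singleton]
      omega
    rw [this, Finset.sum_insert (by simp only [Finset.mem_singleton]; omega), Finset.sum_singleton]
    simpa using h0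
  | succ t ih =>
    intro h
    have key : Finset.Icc a (a + 2*((t+1:ℕ):ℤ) + 1)
        = insert (a + 2*(t:ℤ) + 3) (insert (a + 2*(t:ℤ) + 2) (Finset.Icc a (a + 2*(t:ℤ) + 1))) := by
      ext x
      simp only [Finset.mem_Icc, Finset.mem_insert]
      push_cast
      omega
    rw [key, Finset.sum_insert (by simp only [Finset.mem_insert, Finset.mem_Icc]; omega),
      Finset.sum_insert (by simp only [Finset.mem_Icc]; omega),
      ih (fun i hi => h i (by push_cast; omega))]
    have hlast := h (t+1) (by push_cast; omega)
    push_cast at hlast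
    rw [show a + 2*((t:ℤ)+1) + 1 = a + 2*(t:ℤ)+3 from by ring,
      show a + 2*((t:ℤ)+1) = a + 2*(t:ℤ)+2 from by ring] at hlast
    linear_combination hlast

lemma R_rec (hq : q ≠ 0) (n : ℕ) : R q (n+2) = R q (n+1) + q^((n:ℤ)+2) * R q n := by
  have h2 : ∑ j ∈ Finset.Icc (-(n:ℤ)-3) ((n:ℤ)+2), T q (n+2) j = R q (n+2) :=
    sum_ext (n+2) _ _ (by push_cast; omega) (by push_cast; omega)
  have h1 : ∑ j ∈ Finset.Icc (-(n:ℤ)-3) ((n:ℤ)+2), T q (n+1) j = R q (n+1) :=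
    sum_ext (n+1) _ _ (by push_cast; omega) (by push_cast; omega)
  have h0 : ∑ j ∈ Finset.Icc (-(n:ℤ)-3) ((n:ℤ)+2), T q n j = R q n :=
    sum_ext n _ _ (by omega) (by omega)
  have key := pair_sum (fun j => T q (n+2) j - T q (n+1) j - q^((n:ℤ)+2) * T q n j)
    (-(n:ℤ)-3) (n+2) ?_
  · have expand : ∑ j ∈ Finset.Icc (-(n:ℤ)-3) (-(n:ℤ)-3 + 2*((n+2:ℕ):ℤ) + 1),
        (T q (n+2) j - T q (n+1) j - q^((n:ℤ)+2) * T q n j)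
        = ∑ j ∈ Finset.Icc (-(n:ℤ)-3) ((n:ℤ)+2), T q (n+2) j
          - ∑ j ∈ Finset.Icc (-(n:ℤ)-3) ((n:ℤ)+2), T q (n+1) j
          - q^((n:ℤ)+2) * ∑ j ∈ Finset.Icc (-(n:ℤ)-3) ((n:ℤ)+2), T q n j := by
      rw [show -(n:ℤ)-3 + 2*((n+2:ℕ):ℤ) + 1 = (n:ℤ)+2 from by push_cast; ring]
      rw [Finset.sum_sub_distrib, Finset.sum_sub_distrib, Finset.mul_sum]
    rw [expand, h2, h1, h0] at key
    linear_combination key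
  · intro i hi
    have := pair hq n (-(n:ℤ)-3 + 2*(i:ℤ)) (3*(n:ℤ) + 8 - 5*(i:ℤ)) (by push_cast; ring)
    simpa using this

theorem schur_aux (hq : q ≠ 0) : ∀ n, rrQ q n = R q n ∧ rrQ q (n+1) = R q (n+1) := by
  intro n
  induction n with
  | zero =>
    constructor
    · show (1:ℂ) = R q 0
      rw [R]
      push_cast
      have : Finset.Icc (-1:ℤ) (0:ℤ) = insert (-1 : ℤ) {0} := by
        ext x; simp only [Finset.mem_Icc, Finset.mem_insert, Finset.mem_singleton]; omega
      rw [this, Finset.sum_insert (by simp), Finset.sum_singleton]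
      rw [T_vanish 0 (-1) (by omega)]
      rw [T]
      norm_num [B_zero]
    · show (1:ℂ) = R q 1
      rw [R]
      push_cast
      have : Finset.Icc (-2:ℤ) (1:ℤ) = insert (-2:ℤ) (insert (-1 : ℤ) (insert 0 {1})) := by
        ext x
        simp only [Finset.mem_Icc, Finset.mem_insert, Finset.mem_singleton]
        omega
      rw [this, Finset.sum_insert (by simp), Finset.sum_insert (by simp),
        Finset.sum_insert (by simp), Finset.sum_singleton]
      rw [T_vanish 1 (-2) (by omega), T_vanish 1 (-1) (by omega), T_vanish 1 1 (by omega)]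
      rw [T]
      norm_num [B_zero]
  | succ n ih =>
    refine ⟨ih.2, ?_⟩
    show rrQ q (n+1) + q ^ (n+2) * rrQ q n = R q (n+2)
    rw [ih.1, ih.2, R_rec hq n,
      show ((n:ℤ)+2) = ((n+2 : ℕ) : ℤ) from by push_cast; ring, zpow_natCast]

theorem schur (hq : q ≠ 0) (n : ℕ) : rrQ q n = R q n := (schur_aux hq n).1


section Root
variable {p : ℕ}

lemma hq0 (hp : 1 ≤ p) (hq1 : q ^ (5*p) = 1) : q ≠ 0 := by
  intro h
  rw [h, zero_pow (by omega : 5*p ≠ 0)] at hq1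
  exact zero_ne_one hq1

/-- reduce `zpow` of a nonneg integer to `npow` -/
lemma zpow_toNat (hq : q ≠ 0) (a : ℤ) (ha : 0 ≤ a) : q ^ a = q ^ a.toNat := by
  rw [← zpow_natCast q a.toNat, Int.toNat_of_nonneg ha]

variable (hp : 1 ≤ p) (hq1 : q ^ (5*p) = 1)
  (hprim : ∀ i : ℕ, 0 < i → i < 5*p → q ^ i ≠ 1)
include hp hq1 hprim

lemma zpow_m_one (a : ℤ) : q ^ ((5*(p:ℤ)) * a) = 1 := by
  have hq := hq0 hp hq1
  rw [zpow_mul]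
  rw [show (5*(p:ℤ)) = ((5*p : ℕ) : ℤ) from by push_cast; ring, zpow_natCast, hq1, one_zpow]

lemma B_row_m (K : ℤ) (hK0 : 0 < K) (hKm : K < 5*(p:ℤ)) : B q (5*p) K = 0 := by
  have hq := hq0 hp hq1
  have hm : 5*p = (5*p - 1) + 1 := by omega
  have hstar := B_star hq (5*p-1) K
  have hNcast : ((5*p-1 : ℕ) : ℤ) + 1 = 5*(p:ℤ) := by push_cast; omega
  rw [hNcast] at hstar
  rw [show q ^ (5*(p:ℤ)) = 1 from by
      rw [show (5*(p:ℤ)) = ((5*p : ℕ) : ℤ) from by push_cast; ring, zpow_natCast, hq1]] at hstar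
  rw [sub_self, zero_mul] at hstar
  rw [hm]
  have hne : (1 : ℂ) - q ^ (5*(p:ℤ) - K) ≠ 0 := by
    intro h
    have h2 : q ^ (5*(p:ℤ) - K) = 1 := by linear_combination -h
    rw [zpow_toNat hq _ (by omega)] at h2
    exact hprim (5*(p:ℤ) - K).toNat (by omega) (by omega) h2
  exact (mul_eq_zero.mp hstar).resolve_left hne
  
lemma B_row_m1_mid (K : ℤ) (hK0 : 2 ≤ K) (hKm : K ≤ 5*(p:ℤ) - 1) : B q (5*p+1) K = 0 := by
  rw [B_succ, B_row_m hp hq1 hprim K (by omega) (by omega),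
    B_row_m hp hq1 hprim (K-1) (by omega) (by omega)]
  ring

lemma B_row_m1_one : B q (5*p+1) 1 = 1 := by
  have hq := hq0 hp hq1
  rw [B_succ, B_row_m hp hq1 hprim 1 (by omega) (by push_cast; omega),
    show (1:ℤ)-1 = 0 from by ring, B_zero]
  rw [show ((5*p:ℕ):ℤ) + 1 - 1 = ((5*p:ℕ):ℤ) from by ring, zpow_natCast, hq1]
  ring

lemma B_row_m1_m : B q (5*p+1) (5*(p:ℤ)) = 1 := by
  have e : (5*(p:ℤ)) = ((5*p : ℕ):ℤ) := by push_cast; ring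
  rw [B_succ, e, B_diag, B_row_m hp hq1 hprim (((5*p:ℕ):ℤ)-1) (by push_cast; omega) (by push_cast; omega)]
  ring

lemma B_row_m2_mid (K : ℤ) (hK0 : 3 ≤ K) (hKm : K ≤ 5*(p:ℤ) - 1) : B q (5*p+2) K = 0 := by
  rw [show 5*p+2 = (5*p+1)+1 from rfl, B_succ,
    B_row_m1_mid hp hq1 hprim K (by omega) (by omega),
    B_row_m1_mid hp hq1 hprim (K-1) (by omega) (by omega)]
  ring

lemma B_row_m2_m : B q (5*p+2) (5*(p:ℤ)) = 1 := by
  rw [show 5*p+2 = (5*p+1)+1 from rfl, B_succ, B_row_m1_m hp hq1 hprim,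
    B_row_m1_mid hp hq1 hprim (5*(p:ℤ)-1) (by omega) (by omega)]
  ring

lemma T_row_m (j : ℤ) (hjp : j ≠ (p:ℤ)) (hjm : j ≠ -(p:ℤ)) : T q (5*p) j = 0 := by
  have hcast : ((5*p:ℕ):ℤ) = 5*(p:ℤ) := by push_cast; ring
  rcases lt_or_ge (5*(p:ℤ) - 5*j) 0 with h1 | h1
  · exact T_vanish _ _ (Or.inl (by omega))
  rcases le_or_gt (2*(5*(p:ℤ))+4) (5*(p:ℤ) - 5*j) with h2 | h2
  · exact T_vanish _ _ (Or.inr (by omega))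
  have hK : 2 ≤ (((5*p:ℕ):ℤ) - 5*j)/2 ∧ (((5*p:ℕ):ℤ) - 5*j)/2 ≤ 5*(p:ℤ)-1 := by
    constructor <;> omega
  rw [T, B_row_m1_mid hp hq1 hprim _ hK.1 hK.2]
  ring

lemma T_row_m1 (j : ℤ) (hjp : j ≠ (p:ℤ)) (hjm : j ≠ -(p:ℤ)) : T q (5*p+1) j = 0 := by
  have hcast : ((5*p+1:ℕ):ℤ) = 5*(p:ℤ)+1 := by push_cast; ring
  rcases lt_or_ge (5*(p:ℤ)+1 - 5*j) 0 with h1 | h1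
  · exact T_vanish _ _ (Or.inl (by omega))
  rcases le_or_gt (2*(5*(p:ℤ)+1)+4) (5*(p:ℤ)+1 - 5*j) with h2 | h2
  · exact T_vanish _ _ (Or.inr (by omega))
  have hK : 3 ≤ (((5*p+1:ℕ):ℤ) - 5*j)/2 ∧ (((5*p+1:ℕ):ℤ) - 5*j)/2 ≤ 5*(p:ℤ)-1 := by
    constructor <;> omega
  rw [T, B_row_m2_mid hp hq1 hprim _ hK.1 hK.2]
  ring

lemma Q_m_eq : rrQ q (5*p) = (-1:ℂ)^(p:ℤ) * q ^ ((p:ℤ) * (5*(p:ℤ)+3) / 2)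
    + (-1:ℂ)^(-(p:ℤ)) * q ^ ((-(p:ℤ)) * (5*(-(p:ℤ))+3) / 2) := by
  have hq := hq0 hp hq1
  rw [schur hq]
  rw [R]
  rw [show (∑ j ∈ Finset.Icc (-((5*p:ℕ):ℤ)-1) ((5*p:ℕ):ℤ), T q (5*p) j)
      = ∑ j ∈ ({-(p:ℤ), (p:ℤ)} : Finset ℤ), T q (5*p) j from by
    symm
    apply Finset.sum_subset
    · intro j hj
      simp only [Finset.mem_insert, Finset.mem_singleton] at hj
      rw [Finset.mem_Icc]
      rcases hj with rfl | rfl <;> push_cast <;> omega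
    · intro j _ hj
      simp only [Finset.mem_insert, Finset.mem_singleton] at hj
      push_neg at hj
      exact T_row_m hp hq1 hprim j hj.2 hj.1]
  rw [Finset.sum_pair (by omega : -(p:ℤ) ≠ (p:ℤ))]
  rw [T, T]
  have k1 : (((5*p:ℕ):ℤ) - 5*(p:ℤ))/2 = 0 := by push_cast; omega
  have k2 : (((5*p:ℕ):ℤ) - 5*(-(p:ℤ)))/2 = 5*(p:ℤ) := by push_cast; omega
  rw [k1, k2, B_zero, B_row_m1_m hp hq1 hprim]
  ring

lemma Q_m1_eq : rrQ q (5*p+1) = (-1:ℂ)^(p:ℤ) * q ^ ((p:ℤ) * (5*(p:ℤ)+3) / 2)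
    + (-1:ℂ)^(-(p:ℤ)) * q ^ ((-(p:ℤ)) * (5*(-(p:ℤ))+3) / 2) := by
  have hq := hq0 hp hq1
  rw [schur hq]
  rw [R]
  rw [show (∑ j ∈ Finset.Icc (-((5*p+1:ℕ):ℤ)-1) ((5*p+1:ℕ):ℤ), T q (5*p+1) j)
      = ∑ j ∈ ({-(p:ℤ), (p:ℤ)} : Finset ℤ), T q (5*p+1) j from by
    symm
    apply Finset.sum_subset
    · intro j hj
      simp only [Finset.mem_insert, Finset.mem_singleton] at hj
      rw [Finset.mem_Icc]
      rcases hj with rfl | rfl <;> push_cast <;> omega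
    · intro j _ hj
      simp only [Finset.mem_insert, Finset.mem_singleton] at hj
      push_neg at hj
      exact T_row_m1 hp hq1 hprim j hj.2 hj.1]
  rw [Finset.sum_pair (by omega : -(p:ℤ) ≠ (p:ℤ))]
  rw [T, T]
  have k1 : (((5*p+1:ℕ):ℤ) - 5*(p:ℤ))/2 = 0 := by push_cast; omega
  have k2 : (((5*p+1:ℕ):ℤ) - 5*(-(p:ℤ)))/2 = 5*(p:ℤ) := by push_cast; omega
  rw [k1, k2, B_zero, B_row_m2_m hp hq1 hprim]
  ring


/-- `(-1)^p q^{E(p)} = -q^{4p}` and `(-1)^p q^{E(-p)} = -q^{p}`. -/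
lemma key_exp : (-1:ℂ)^(p:ℤ) * q ^ ((p:ℤ) * (5*(p:ℤ)+3) / 2) = -q^(4*p)
    ∧ (-1:ℂ)^(-(p:ℤ)) * q ^ ((-(p:ℤ)) * (5*(-(p:ℤ))+3) / 2) = -q^p := by
  have hq := hq0 hp hq1
  -- the common difference exponent D with 2*D = 5p(p-1)
  have neg1 : ((-1:ℂ))^(-(p:ℤ)) = ((-1:ℂ))^(p:ℤ) := by
    rw [zpow_neg, ← inv_zpow]
    norm_num
  have claim : ∀ (a : ℤ) (b : ℕ), 0 ≤ a → 2*a = 5*(p:ℤ)*((p:ℤ)-1) + 2*(b:ℤ) →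
      (-1:ℂ)^(p:ℤ) * q ^ a = -q^b := by
    intro a b ha hab
    rcases Nat.even_or_odd p with ⟨u, hu⟩ | ⟨u, hu⟩
    · -- p = 2u even : q^(5p/2) = -1
      have hu1 : 1 ≤ u := by omega
      have hx2 : (q^(5*u))^2 = 1 := by
        rw [← pow_mul, show 5*u*2 = 5*p from by omega, hq1]
      have hxne : q^(5*u) ≠ 1 := hprim (5*u) (by omega) (by omega)
      have hx : q^(5*u) = -1 := by
        have h0 : (q^(5*u) - 1) * (q^(5*u) + 1) = 0 := by ring_nf; linear_combination hx2
        rcases mul_eq_zero.mp h0 with h | h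
        · exact absurd (by linear_combination h) hxne
        · linear_combination h
      -- a = 5u(p-1) + b
      have hpe : (p:ℤ) = 2*(u:ℤ) := by omega
      have hkey : 5*(p:ℤ)*((p:ℤ)-1) = 2*(5*(u:ℤ)*((p:ℤ)-1)) := by rw [hpe]; ring
      have ha' : a = ((5*u*(p-1) + b : ℕ) : ℤ) := by
        push_cast [Nat.cast_sub (show 1 ≤ p from hp)]
        linarith [hab, hkey]
      have : q ^ a = q ^ ((5*u*(p-1) + b : ℕ)) := by
        rw [zpow_toNat hq a ha, ha', Int.toNat_natCast]
      rw [this, pow_add, pow_mul, hx]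
      have hsgn : ((-1:ℂ))^(p:ℤ) = 1 := by
        rw [show (p:ℤ) = 2*(u:ℤ) from by omega, zpow_mul]
        norm_num
      rw [hsgn]
      have : ((-1:ℂ))^(p-1) = -1 := by
        rw [show p - 1 = 2*u - 1 from by omega]
        rw [Odd.neg_one_pow ⟨u-1, by omega⟩]
      rw [this]
      ring
    · -- p odd : 5p(p-1)/2 = 5p * u with p = 2u+1
      have hpe : (p:ℤ) = 2*(u:ℤ)+1 := by omega
      have hkey : 5*(p:ℤ)*((p:ℤ)-1) = 2*(5*(p:ℤ)*(u:ℤ)) := by rw [hpe]; ring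
      have ha' : a = ((5*p*u + b : ℕ) : ℤ) := by
        push_cast
        linarith [hab, hkey]
      have : q ^ a = q ^ ((5*p*u + b : ℕ)) := by
        rw [zpow_toNat hq a ha, ha', Int.toNat_natCast]
      rw [this, pow_add, pow_mul, hq1, one_pow, one_mul]
      have hsgn : ((-1:ℂ))^(p:ℤ) = -1 := by
        rw [show (p:ℤ) = 2*(u:ℤ)+1 from by omega, zpow_add_one₀ (by norm_num : (-1:ℂ) ≠ 0),
          zpow_mul]
        norm_num
      rw [hsgn]
      ring
  constructor
  · apply claim _ _ (by have := twoE (p:ℤ); positivity)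
    have h := twoE (p:ℤ)
    rw [h]
    push_cast
    ring
  · rw [neg1]
    have hp' : 1 ≤ (p:ℤ) := by exact_mod_cast hp
    apply claim
    · have h := twoE (-(p:ℤ))
      nlinarith [h, hp']
    · have h := twoE (-(p:ℤ))
      rw [h]
      push_cast
      ring

/-- eigenvalue -/
lemma Q_m_val : rrQ q (5*p) = -q^(4*p) - q^p ∧ rrQ q (5*p+1) = -q^(4*p) - q^p := by
  have h := key_exp hp hq1 hprim
  rw [Q_m_eq hp hq1 hprim, Q_m1_eq hp hq1 hprim, h.1, h.2]
  constructor <;> ring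

/-- periodicity -/
lemma Q_periodic : ∀ n : ℕ, rrQ q (n + 5*p) = (-q^(4*p) - q^p) * rrQ q n := by
  have base := Q_m_val hp hq1 hprim
  have H : ∀ n : ℕ, rrQ q (n + 5*p) = (-q^(4*p) - q^p) * rrQ q n
      ∧ rrQ q (n + 1 + 5*p) = (-q^(4*p) - q^p) * rrQ q (n+1) := by
    intro n
    induction n with
    | zero =>
      constructor
      · rw [show 0 + 5*p = 5*p from by omega, base.1, show rrQ q 0 = 1 from rfl]; ring
      · rw [show 0 + 1 + 5*p = 5*p + 1 from by omega, base.2, show rrQ q 1 = 1 from rfl]; ring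
    | succ n ih =>
      refine ⟨ih.2, ?_⟩
      have e : n + 1 + 1 + 5*p = (n + 5*p) + 2 := by omega
      rw [e]
      show rrQ q ((n+5*p) + 1) + q ^ ((n+5*p)+2) * rrQ q (n+5*p) = _
      have e2 : n + 5*p + 1 = n + 1 + 5*p := by omega
      rw [e2, ih.2, ih.1]
      have e3 : q ^ (n + 5*p + 2) = q ^ (n+2) := by
        rw [show n + 5*p + 2 = (n+2) + 5*p from by omega, pow_add, hq1, mul_one]
      rw [e3]
      show _ = (-q^(4*p) - q^p) * (rrQ q (n+1) + q^(n+2) * rrQ q n)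
      ring
  exact fun n => (H n).1

lemma Q_geom : ∀ t : ℕ, rrQ q (t * (5*p)) = (-q^(4*p) - q^p)^t
    ∧ rrQ q (t * (5*p) + 1) = (-q^(4*p) - q^p)^t := by
  intro t
  induction t with
  | zero =>
    have e : 0*(5*p) = 0 := by omega
    exact ⟨by rw [e, pow_zero]; rfl, by rw [e, pow_zero]; rfl⟩
  | succ t ih =>
    constructor
    · rw [show (t+1)*(5*p) = t*(5*p) + 5*p from by ring, Q_periodic hp hq1 hprim, ih.1]
      ring
    · rw [show (t+1)*(5*p) + 1 = (t*(5*p) + 1) + 5*p from by ring, Q_periodic hp hq1 hprim, ih.2]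
      ring

end Root

noncomputable def dd (q : ℂ) (n : ℕ) : ℂ := rrP q (n+1) * rrQ q n - rrP q n * rrQ q (n+1)

lemma dd_succ (n : ℕ) : dd q (n+1) = (-q^(n+2)) * dd q n := by
  show (rrP q (n+1) + q^(n+2) * rrP q n) * rrQ q (n+1)
      - rrP q (n+1) * (rrQ q (n+1) + q^(n+2) * rrQ q n) = _
  rw [dd]
  ring

lemma abs_dd (habs : ‖q‖ = 1) (n : ℕ) : ‖dd q n‖ = 1 := by
  induction n with
  | zero =>
    show ‖(1+q) * 1 - 1 * 1‖ = 1
    rw [show (1+q) * 1 - 1 * 1 = q from by ring, habs]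
  | succ n ih =>
    rw [dd_succ, norm_mul, norm_neg, norm_pow, habs, ih]
    norm_num

lemma q_ne_zero (habs : ‖q‖ = 1) : q ≠ 0 := by
  intro h
  rw [h] at habs
  simp at habs

/-- Divergence criterion: if `|Q_n| + |Q_{n+1}| < 1` infinitely often, the
approximants do not converge. -/
theorem criterion (habs : ‖q‖ = 1)
    (hsmall : ∀ N : ℕ, ∃ n, N < n ∧ ‖rrQ q n‖ + ‖rrQ q (n+1)‖ < 1) :
    ¬ ∃ L : ℂ, Tendsto (fun n => rrP q n / rrQ q n) atTop (𝓝 L) := by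
  rintro ⟨L, hL⟩
  rw [Metric.tendsto_atTop] at hL
  obtain ⟨N, hN⟩ := hL (1/2) (by norm_num)
  obtain ⟨n, hn, hsum⟩ := hsmall N
  have hd := abs_dd habs n
  have habsQ1 : ‖rrQ q n‖ < 1 := by
    have := norm_nonneg (rrQ q (n+1)); linarith
  have habsQ2 : ‖rrQ q (n+1)‖ < 1 := by
    have := norm_nonneg (rrQ q n); linarith
  have gap : ∃ a b : ℕ, N ≤ a ∧ N ≤ b ∧
      1 < ‖rrP q b / rrQ q b - rrP q a / rrQ q a‖ := by
    by_cases h1 : rrQ q n = 0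
    · -- first denominator vanishes; use indices n+1, n+2
      have h2 : rrQ q (n+1) ≠ 0 := by
        intro h2
        rw [dd, h1, h2] at hd
        simp at hd
      have hQ2 : rrQ q (n+2) = rrQ q (n+1) := by
        show rrQ q (n+1) + q^(n+2) * rrQ q n = _
        rw [h1]; ring
      refine ⟨n+1, n+2, by omega, by omega, ?_⟩
      have e : rrP q (n+2) / rrQ q (n+2) - rrP q (n+1) / rrQ q (n+1)
          = dd q (n+1) / (rrQ q (n+2) * rrQ q (n+1)) := by
        rw [dd]
        field_simp [hQ2.symm ▸ h2, h2]
      rw [e, norm_div, abs_dd habs, norm_mul, hQ2]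
      have hp2 : 0 < ‖rrQ q (n+1)‖ := norm_pos_iff.mpr h2
      rw [lt_div_iff₀ (by positivity)]
      nlinarith
    · by_cases h2 : rrQ q (n+1) = 0
      · -- second denominator vanishes; use indices n, n+2
        have hq := q_ne_zero habs
        have hQ2 : rrQ q (n+2) = q^(n+2) * rrQ q n := by
          show rrQ q (n+1) + q^(n+2) * rrQ q n = _
          rw [h2]; ring
        have hQ2ne : rrQ q (n+2) ≠ 0 := by
          rw [hQ2]; exact mul_ne_zero (pow_ne_zero _ hq) h1
        refine ⟨n, n+2, by omega, by omega, ?_⟩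
        have e : rrP q (n+2) / rrQ q (n+2) - rrP q n / rrQ q n
            = dd q n / (rrQ q (n+2) * rrQ q n) := by
          have hnum : rrP q (n+2) * rrQ q n - rrP q n * rrQ q (n+2) = dd q n := by
            show (rrP q (n+1) + q^(n+2) * rrP q n) * rrQ q n
                - rrP q n * (rrQ q (n+1) + q^(n+2) * rrQ q n) = _
            rw [dd]; ring
          field_simp [hQ2ne, h1]
          linear_combination hnum
        rw [e, norm_div, abs_dd habs, norm_mul, hQ2, norm_mul, norm_pow, habs, one_pow, one_mul]
        have hp1 : 0 < ‖rrQ q n‖ := norm_pos_iff.mpr h1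
        rw [lt_div_iff₀ (by positivity)]
        nlinarith
      · -- generic case: indices n, n+1
        refine ⟨n, n+1, by omega, by omega, ?_⟩
        have e : rrP q (n+1) / rrQ q (n+1) - rrP q n / rrQ q n
            = dd q n / (rrQ q (n+1) * rrQ q n) := by
          rw [dd]
          field_simp [h1, h2]
        rw [e, norm_div, abs_dd habs, norm_mul]
        have p1 : 0 < ‖rrQ q (n+1)‖ := by
          simpa using norm_pos_iff.mpr h2
        have p2 : 0 < ‖rrQ q n‖ := by
          simpa using norm_pos_iff.mpr h1
        rw [lt_div_iff₀ (by positivity)]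
        nlinarith
  obtain ⟨a, b, ha, hb, hgap⟩ := gap
  have da := hN a ha
  have db := hN b hb
  rw [Complex.dist_eq] at da db
  have : ‖rrP q b / rrQ q b - rrP q a / rrQ q a‖
      ≤ ‖rrP q b / rrQ q b - L‖ + ‖rrP q a / rrQ q a - L‖ := by
    have := norm_sub_le_norm_sub_add_norm_sub (rrP q b / rrQ q b) L (rrP q a / rrQ q a)
    calc ‖rrP q b / rrQ q b - rrP q a / rrQ q a‖
        ≤ ‖rrP q b / rrQ q b - L‖ + ‖L - rrP q a / rrQ q a‖ := this
      _ = _ := by rw [norm_sub_rev L]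
  linarith

/-- Existence of a "good" point within `δ` of any point of the unit circle. -/
lemma good_point (x : ℂ) (hx : ‖x‖ = 1) (δ : ℝ) (hδ : 0 < δ) :
    ∃ q : ℂ, ‖q‖ = 1 ∧ ‖q - x‖ < δ ∧
      (∀ N : ℕ, ∃ n, N < n ∧ ‖rrQ q n‖ + ‖rrQ q (n+1)‖ < 1) := by
  have hπ := Real.pi_pos
  have hπ315 := Real.pi_lt_d2
  obtain ⟨pr, hpr_ge, hpr⟩ := Nat.exists_infinite_primes (max 14 (⌈9 * Real.pi / δ⌉₊ + 1))
  have hpr14 : (14 : ℕ) ≤ pr := le_trans (le_max_left _ _) hpr_ge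
  have hprpos : (0:ℝ) < pr := by positivity
  have hpr14' : (14 : ℝ) ≤ (pr:ℝ) := by exact_mod_cast hpr14
  have hprδ : 9 * Real.pi / δ < pr := by
    have h1 : (⌈9 * Real.pi / δ⌉₊ + 1 : ℕ) ≤ pr := le_trans (le_max_right _ _) hpr_ge
    have h2 := Nat.le_ceil (9 * Real.pi / δ)
    have h3 : (⌈9 * Real.pi / δ⌉₊ : ℝ) < pr := by exact_mod_cast Nat.lt_of_succ_le h1
    linarith
  set θ : ℝ := x.arg with hθ
  have hxexp : x = Complex.exp (θ * Complex.I) := by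
    conv_lhs => rw [← Complex.norm_mul_exp_arg_mul_I x]
    rw [hx]
    simp [hθ]
  set c0 : ℝ := θ * (5*pr) / (2 * Real.pi) with hc0
  set k0 : ℤ := 5 * ⌈c0/5⌉ + 1 with hk0
  have hk0c : |(k0 : ℝ) - c0| ≤ 6 := by
    have h1 := Int.le_ceil (c0/5)
    have h2 := Int.ceil_lt_add_one (c0/5)
    rw [abs_le, hk0]
    constructor
    · push_cast; nlinarith
    · push_cast; nlinarith
  set k : ℤ := if (pr : ℤ) ∣ k0 then k0 + 5 else k0 with hk
  have hkc : |(k : ℝ) - c0| ≤ 11 := by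
    rw [hk]
    rw [abs_le] at hk0c ⊢
    split
    · push_cast
      constructor <;> [linarith [hk0c.1]; linarith [hk0c.2]]
    · constructor <;> [linarith [hk0c.1]; linarith [hk0c.2]]
  have hk5 : k % 5 = 1 := by
    rw [hk]; split <;> omega
  have hkpr : ¬ (pr:ℤ) ∣ k := by
    rw [hk]
    split
    · intro h
      rename_i hdvd
      have h5 : (pr:ℤ) ∣ 5 := (dvd_add_right hdvd).mp h
      have h5' : (pr:ℤ) ≤ 5 := Int.le_of_dvd (by norm_num) h5
      have : (14:ℤ) ≤ (pr:ℤ) := by exact_mod_cast hpr14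
      omega
    · assumption
  have hcop : IsCoprime (5*(pr:ℤ)) k := by
    apply IsCoprime.mul_left
    · exact ⟨-(k/5), 1, by omega⟩
    · exact (Int.prime_iff_natAbs_prime.mpr (by simpa using hpr)).coprime_iff_not_dvd.mpr hkpr
  set φ : ℝ := 2 * Real.pi * k / (5*pr) with hφ
  set q : ℂ := Complex.exp (φ * Complex.I) with hqdef
  have habsq : ‖q‖ = 1 := Complex.norm_exp_ofReal_mul_I φ
  have hprC : ((pr:ℂ)) ≠ 0 := by exact_mod_cast ne_of_gt hprpos
  have hq1 : q ^ (5*pr) = 1 := by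
    rw [hqdef, ← Complex.exp_nat_mul]
    have e : ((5*pr : ℕ):ℂ) * (↑φ * Complex.I) = (k:ℂ) * (2 * ↑Real.pi * Complex.I) := by
      rw [hφ]
      push_cast
      field_simp
    rw [e, Complex.exp_int_mul_two_pi_mul_I]
  have hprim : ∀ i : ℕ, 0 < i → i < 5*pr → q ^ i ≠ 1 := by
    intro i hi0 hi5 hcon
    rw [hqdef, ← Complex.exp_nat_mul, Complex.exp_eq_one_iff] at hcon
    obtain ⟨n, hn⟩ := hcon
    have hIcancel : ((i:ℝ) * φ : ℂ) = ((n * (2*Real.pi) : ℝ) : ℂ) := by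
      have h2 : ((i:ℝ) * φ : ℂ) * Complex.I = ((n * (2*Real.pi) : ℝ) : ℂ) * Complex.I := by
        push_cast
        linear_combination hn
      exact mul_right_cancel₀ Complex.I_ne_zero h2
    have hreal : (i:ℝ) * φ = n * (2*Real.pi) := by exact_mod_cast hIcancel
    have hreal2 : (2*Real.pi) * ((i:ℝ)*(k:ℝ)) = (2*Real.pi) * ((n:ℝ)*(5*(pr:ℝ))) := by
      rw [hφ] at hreal
      field_simp at hreal
      linear_combination (2*Real.pi) * hreal
    have hrealZ : (i:ℤ) * k = n * (5*(pr:ℤ)) := by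
      have := mul_left_cancel₀ (show (2*Real.pi) ≠ 0 from by positivity) hreal2
      exact_mod_cast this
    have hdvd : (5*(pr:ℤ)) ∣ (k * (i:ℤ)) := ⟨n, by linear_combination hrealZ⟩
    have hdvd2 : (5*(pr:ℤ)) ∣ (i:ℤ) := hcop.dvd_of_dvd_mul_left hdvd
    have := Int.le_of_dvd (by exact_mod_cast hi0) hdvd2
    have hi5' : (i:ℤ) < 5*(pr:ℤ) := by exact_mod_cast hi5
    omega
  -- distance bound
  have hdist : ‖q - x‖ < δ := by
    have hfact : q - x = Complex.exp (↑θ * Complex.I) * (Complex.exp (↑(φ - θ) * Complex.I) - 1) := by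
      rw [hqdef, hxexp, mul_sub, mul_one, ← Complex.exp_add]
      congr 2
      push_cast
      ring
    have hsmallangle : |φ - θ| ≤ 22 * Real.pi / (5*pr) := by
      have : φ - θ = (2*Real.pi / (5*pr)) * ((k:ℝ) - c0) := by
        rw [hφ, hc0]
        field_simp
      rw [this, abs_mul, abs_of_pos (show (0:ℝ) < 2*Real.pi/(5*pr) from by positivity)]
      calc 2*Real.pi/(5*pr) * |(k:ℝ) - c0| ≤ 2*Real.pi/(5*pr) * 11 := by
            apply mul_le_mul_of_nonneg_left hkc (by positivity)
        _ = 22 * Real.pi / (5*pr) := by ring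
    have hle1 : |φ - θ| ≤ 1 := by
      apply le_trans hsmallangle
      rw [div_le_one (by positivity)]
      nlinarith
    have habsz : ‖↑(φ - θ) * Complex.I‖ = |φ - θ| := by
      rw [norm_mul, Complex.norm_I, Complex.norm_real, Real.norm_eq_abs, mul_one]
    have hexp := Complex.norm_exp_sub_one_le (x := ↑(φ - θ) * Complex.I) (by rw [habsz]; exact hle1)
    rw [hfact, norm_mul, Complex.norm_exp_ofReal_mul_I, one_mul]
    calc ‖Complex.exp (↑(φ - θ) * Complex.I) - 1‖
        ≤ 2 * ‖↑(φ - θ) * Complex.I‖ := hexp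
      _ = 2 * |φ - θ| := by rw [habsz]
      _ ≤ 2 * (22 * Real.pi / (5*pr)) := by linarith
      _ < δ := by
          have h9 : 9 * Real.pi < pr * δ := by
            rw [div_lt_iff₀ hδ] at hprδ
            linarith
          have h5pr : (0:ℝ) < 5*(pr:ℝ) := by positivity
          rw [show 2*(22*Real.pi/(5*(pr:ℝ))) = 44*Real.pi/(5*(pr:ℝ)) from by ring,
            div_lt_iff₀ h5pr]
          nlinarith
  -- the eigenvalue has modulus < 1
  have hqpr : q ^ pr = Complex.exp (↑(2*Real.pi/5 : ℝ) * Complex.I) := by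
    rw [hqdef, ← Complex.exp_nat_mul]
    have hkt : k = 5*(k/5) + 1 := by omega
    have e : ((pr : ℕ):ℂ) * (↑φ * Complex.I)
        = ↑(2*Real.pi/5 : ℝ) * Complex.I + ((k/5 : ℤ):ℂ) * (2 * ↑Real.pi * Complex.I) := by
      have hkC : ((k:ℤ):ℂ) = 5*((k/5:ℤ):ℂ)+1 := by exact_mod_cast hkt
      rw [hφ]
      push_cast
      rw [hkC]
      field_simp
      ring
    rw [e, Complex.exp_add, Complex.exp_int_mul_two_pi_mul_I, mul_one]
  have hq4pr : q ^ (4*pr) = Complex.exp (-(↑(2*Real.pi/5 : ℝ)) * Complex.I) := by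
    rw [show 4*pr = pr*4 from by ring, pow_mul, hqpr, ← Complex.exp_nat_mul]
    rw [show ((4:ℕ):ℂ) * (↑(2*Real.pi/5:ℝ) * Complex.I)
        = -(↑(2*Real.pi/5:ℝ)) * Complex.I + ((1:ℤ):ℂ) * (2 * ↑Real.pi * Complex.I) from by
      push_cast; ring]
    rw [Complex.exp_add, Complex.exp_int_mul_two_pi_mul_I, mul_one]
  set C : ℂ := -q^(4*pr) - q^pr with hC
  have hCcos : C = -(2 * Complex.cos (↑(2*Real.pi/5 : ℝ))) := by
    rw [hC, Complex.two_cos, hqpr, hq4pr]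
    ring
  have hcospos : 0 < Real.cos (2*Real.pi/5) := by
    apply Real.cos_pos_of_mem_Ioo
    constructor
    · linarith
    · linarith
  have habsC : ‖C‖ < 1 := by
    rw [hCcos, norm_neg]
    have e2 : (2 : ℂ) * Complex.cos (↑(2*Real.pi/5:ℝ)) = ((2 * Real.cos (2*Real.pi/5) : ℝ) : ℂ) := by
      rw [Complex.ofReal_mul, Complex.ofReal_cos]
      norm_num
    rw [e2, Complex.norm_real, Real.norm_eq_abs, abs_of_pos (by linarith)]
    have hlt : Real.cos (2*Real.pi/5) < Real.cos (Real.pi/3) :=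
      Real.cos_lt_cos_of_nonneg_of_le_pi (by positivity) (by linarith) (by linarith)
    rw [Real.cos_pi_div_three] at hlt
    linarith
  refine ⟨q, habsq, hdist, ?_⟩
  intro N
  have hCn : (0:ℝ) ≤ ‖C‖ := norm_nonneg C
  obtain ⟨t0, ht0⟩ := exists_pow_lt_of_lt_one (show (0:ℝ) < 1/2 from by norm_num) habsC
  set t := t0 + N + 1 with ht
  have hpow : (‖C‖)^t ≤ (‖C‖)^t0 :=
    pow_le_pow_of_le_one hCn (le_of_lt habsC) (by omega)
  refine ⟨t * (5*pr), ?_, ?_⟩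
  · have h5 : 1 ≤ 5*pr := by omega
    calc N < t := by omega
      _ = t*1 := by omega
      _ ≤ t * (5*pr) := Nat.mul_le_mul_left t h5
  · have hg := Q_geom (p := pr) (by omega) hq1 hprim t
    rw [hg.1, hg.2, ← hC]
    rw [norm_pow]
    linarith

lemma rrQ_cont (n : ℕ) : Continuous fun q : ℂ => rrQ q n := by
  have H : ∀ m : ℕ, Continuous (fun q : ℂ => rrQ q m)
      ∧ Continuous (fun q : ℂ => rrQ q (m+1)) := by
    intro m
    induction m with
    | zero =>
      constructor
      · show Continuous fun _ : ℂ => (1:ℂ)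
        exact continuous_const
      · show Continuous fun _ : ℂ => (1:ℂ)
        exact continuous_const
    | succ m ih =>
      refine ⟨ih.2, ?_⟩
      show Continuous fun q : ℂ => rrQ q (m+1) + q ^ (m+2) * rrQ q m
      exact ih.2.add ((continuous_pow (m+2)).mul ih.1)
  exact (H n).1

/-- The uncountable divergence set. -/
def Ybad : Set ℂ :=
  {y | ‖y‖ = 1 ∧
    ∀ N : ℕ, ∃ n, N < n ∧ ‖rrQ y n‖ + ‖rrQ y (n+1)‖ < 1}

abbrev Circ := Metric.sphere (0:ℂ) 1

lemma abs_of_mem (x : Circ) : ‖(x : ℂ)‖ = 1 := by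
  have := x.2
  rw [mem_sphere_zero_iff_norm] at this
  simpa using this

def U (N : ℕ) : Set Circ :=
  {x | ∃ n, N < n ∧ ‖rrQ (x:ℂ) n‖ + ‖rrQ (x:ℂ) (n+1)‖ < 1}

lemma U_open (N : ℕ) : IsOpen (U N) := by
  have : U N = ⋃ (n : ℕ) (_ : N < n),
      {x : Circ | ‖rrQ (x:ℂ) n‖ + ‖rrQ (x:ℂ) (n+1)‖ < 1} := by
    ext x
    simp only [U, Set.mem_setOf_eq, Set.mem_iUnion]
    tauto
  rw [this]
  apply isOpen_iUnion
  intro n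
  apply isOpen_iUnion
  intro _
  have hc : Continuous fun x : Circ =>
      ‖rrQ (x:ℂ) n‖ + ‖rrQ (x:ℂ) (n+1)‖ := by
    apply Continuous.add
    · exact (continuous_norm.comp ((rrQ_cont n).comp continuous_subtype_val))
    · exact (continuous_norm.comp ((rrQ_cont (n+1)).comp continuous_subtype_val))
  exact isOpen_lt hc continuous_const

lemma U_dense (N : ℕ) : Dense (U N) := by
  rw [Metric.dense_iff]
  intro x r hr
  obtain ⟨q, hq1, hq2, hq3⟩ := good_point (x:ℂ) (abs_of_mem x) r hr
  refine ⟨⟨q, by rw [mem_sphere_zero_iff_norm]; exact hq1⟩, ?_, ?_⟩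
  · rw [Metric.mem_ball, Subtype.dist_eq, Complex.dist_eq]
    exact hq2
  · exact hq3 N

lemma compl_dense (z : ℂ) : Dense {x : Circ | (x:ℂ) ≠ z} := by
  rw [Metric.dense_iff]
  intro x r hr
  set ε : ℝ := min (r/4) 1 with hε
  have hε0 : 0 < ε := by
    rw [hε]; positivity
  have hε1 : ε ≤ 1 := min_le_right _ _
  have hεr : ε ≤ r/4 := min_le_left _ _
  have hx0 : (x:ℂ) ≠ 0 := by
    intro h
    have := abs_of_mem x
    rw [h] at this
    simp at this
  -- two candidate points
  have hmem : ∀ a : ℝ, ((x:ℂ) * Complex.exp (↑a * Complex.I)) ∈ Circ := by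
    intro a
    rw [mem_sphere_zero_iff_norm, norm_mul, abs_of_mem x,
      Complex.norm_exp_ofReal_mul_I, one_mul]
  have hdist : ∀ a : ℝ, |a| ≤ 1 → dist ((x:ℂ) * Complex.exp (↑a * Complex.I)) (x:ℂ) ≤ 2*|a| := by
    intro a ha
    rw [Complex.dist_eq]
    have e : (x:ℂ) * Complex.exp (↑a * Complex.I) - x = (x:ℂ) * (Complex.exp (↑a * Complex.I) - 1) := by
      ring
    rw [e, norm_mul, abs_of_mem x, one_mul]
    have habsa : ‖↑a * Complex.I‖ = |a| := by
      rw [norm_mul, Complex.norm_I, Complex.norm_real, Real.norm_eq_abs, mul_one]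
    calc ‖Complex.exp (↑a * Complex.I) - 1‖
        ≤ 2 * ‖↑a * Complex.I‖ := Complex.norm_exp_sub_one_le (by rw [habsa]; exact ha)
      _ = 2*|a| := by rw [habsa]
  have hne12 : (x:ℂ) * Complex.exp (↑ε * Complex.I) ≠ (x:ℂ) * Complex.exp (↑(ε/2) * Complex.I) := by
    intro h
    have h2 := mul_left_cancel₀ hx0 h
    have h3 : Complex.exp (↑ε * Complex.I - ↑(ε/2) * Complex.I) = 1 := by
      rw [Complex.exp_sub, h2, div_self (Complex.exp_ne_zero _)]
    rw [Complex.exp_eq_one_iff] at h3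
    obtain ⟨n, hn⟩ := h3
    have hIc : ((ε - ε/2 : ℝ) : ℂ) = ((n * (2*Real.pi) : ℝ) : ℂ) := by
      apply mul_right_cancel₀ Complex.I_ne_zero
      push_cast at hn ⊢
      linear_combination hn
    have hre : ε - ε/2 = n * (2*Real.pi) := by exact_mod_cast hIc
    have hπ := Real.pi_gt_three
    rcases lt_trichotomy n 0 with hn0 | hn0 | hn0
    · have : (n:ℝ) ≤ -1 := by exact_mod_cast (by omega : n ≤ -1)
      nlinarith
    · rw [hn0] at hre
      norm_num at hre
      linarith
    · have : (1:ℝ) ≤ (n:ℝ) := by exact_mod_cast hn0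
      nlinarith
  have hor : (x:ℂ) * Complex.exp (↑ε * Complex.I) ≠ z
      ∨ (x:ℂ) * Complex.exp (↑(ε/2) * Complex.I) ≠ z := by
    by_contra hcon
    push_neg at hcon
    exact hne12 (hcon.1.trans hcon.2.symm)
  have hball : ∀ a : ℝ, 0 < a → a ≤ ε →
      (⟨(x:ℂ) * Complex.exp (↑a * Complex.I), hmem a⟩ : Circ) ∈ Metric.ball x r := by
    intro a ha0 haε
    rw [Metric.mem_ball, Subtype.dist_eq]
    calc dist ((x:ℂ) * Complex.exp (↑a * Complex.I)) (x:ℂ) ≤ 2*|a| :=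
          hdist a (by rw [abs_of_pos ha0]; linarith)
      _ < r := by rw [abs_of_pos ha0]; linarith
  rcases hor with h | h
  · exact ⟨⟨(x:ℂ) * Complex.exp (↑ε * Complex.I), hmem ε⟩,
      hball ε hε0 le_rfl, h⟩
  · exact ⟨⟨(x:ℂ) * Complex.exp (↑(ε/2) * Complex.I), hmem (ε/2)⟩,
      hball (ε/2) (by linarith) (by linarith), h⟩

theorem Ybad_uncountable : ¬ Ybad.Countable := by
  intro hcount
  have hXne : Nonempty Circ := ⟨⟨1, by simp⟩⟩
  by_cases hne : Ybad.Nonempty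
  · obtain ⟨f, hf⟩ := hcount.exists_eq_range hne
    set g : ℕ ⊕ ℕ → Set Circ := Sum.elim U (fun i => {x : Circ | (x:ℂ) ≠ f i}) with hg
    have hopen : ∀ i, IsOpen (g i) := by
      rintro (N | i)
      · exact U_open N
      · show IsOpen {x : Circ | (x:ℂ) ≠ f i}
        have : {x : Circ | (x:ℂ) ≠ f i} = Subtype.val ⁻¹' ({f i}ᶜ) := rfl
        rw [this]
        exact (isOpen_compl_singleton).preimage continuous_subtype_val
    have hdense : ∀ i, Dense (g i) := by
      rintro (N | i)
      · exact U_dense N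
      · exact compl_dense (f i)
    have hD := dense_iInter_of_isOpen hopen hdense
    obtain ⟨x, hx⟩ := hD.nonempty
    rw [Set.mem_iInter] at hx
    have hxY : (x:ℂ) ∈ Ybad := by
      refine ⟨abs_of_mem x, ?_⟩
      intro N
      exact hx (Sum.inl N)
    have hxnot : ∀ i, (x:ℂ) ≠ f i := fun i => hx (Sum.inr i)
    rw [hf] at hxY
    obtain ⟨i, hi⟩ := hxY
    exact hxnot i hi.symm
  · have hD := dense_iInter_of_isOpen U_open U_dense
    obtain ⟨x, hx⟩ := hD.nonempty
    rw [Set.mem_iInter] at hx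
    exact hne ⟨x, abs_of_mem x, fun N => hx N⟩


end RRaux


theorem stmt11 :
    ∃ Y : Set ℂ, ¬ Y.Countable ∧ (∀ y ∈ Y, ‖y‖ = 1) ∧
      ∀ y ∈ Y, ¬ ∃ L : ℂ, Tendsto (fun n => rrP y n / rrQ y n) atTop (𝓝 L) := by
  refine ⟨RRaux.Ybad, RRaux.Ybad_uncountable, fun y hy => hy.1, fun y hy => ?_⟩
  exact RRaux.criterion hy.1 hy.2
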